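/- In the field ℚ(m,s), setting r = −((s−1)²(2s−1)m + (54s³+27s²−72s+23))/(2(m−27)(m+27)) and z = −((s−1)²(2s−1)(m²+729) + 2(54s³+27s²−72s+23)m)/((m−27)(m+27)), the identity z² = 11664r² − 8(54s³+27s²−72s+23)r + (s−1)⁴(2s−1)² holds. -/

import Mathlib

set_option maxHeartbeats 2000000


/-- In `ℚ(m,s)`, with `r = −((s−1)²(2s−1)m + (54s³+27s²−72s+23))/(2(m−27)(m+27))` and
`z = −((s−1)²(2s−1)(m²+729) + 2(54s³+27s²−72s+23)m)/((m−27)(m+27))`, the identity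
`z² = 11664r² − 8(54s³+27s²−72s+23)r + (s−1)⁴(2s−1)²` holds
(rational parametrization of `Y₋(9)`). -/
theorem Y9_parametrization :
    let K := FractionRing (MvPolynomial (Fin 2) ℚ)
    let m : K := algebraMap (MvPolynomial (Fin 2) ℚ) K (MvPolynomial.X 0)
    let s : K := algebraMap (MvPolynomial (Fin 2) ℚ) K (MvPolynomial.X 1)
    let r : K := -((s-1)^2*(2*s-1)*m + (54*s^3 + 27*s^2 - 72*s + 23)) / (2*(m-27)*(m+27))
    let z : K := -((s-1)^2*(2*s-1)*(m^2+729) + 2*(54*s^3 + 27*s^2 - 72*s + 23)*m) /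
      ((m-27)*(m+27))
    z^2 = 11664*r^2 - 8*(54*s^3 + 27*s^2 - 72*s + 23)*r + (s-1)^4*(2*s-1)^2 := by
  intro K m s r z
  have hinj := IsFractionRing.injective (MvPolynomial (Fin 2) ℚ) K
  have h1 : m - 27 ≠ 0 := by
    have : m - 27 = algebraMap (MvPolynomial (Fin 2) ℚ) K (MvPolynomial.X 0 - 27) := by
      push_cast [m, map_sub, map_ofNat]; ring
    rw [this]
    simp only [ne_eq, map_eq_zero_iff _ hinj]
    intro h
    have := congrArg (MvPolynomial.eval fun _ => (0 : ℚ)) h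
    simp [map_ofNat] at this
  have h2 : m + 27 ≠ 0 := by
    have : m + 27 = algebraMap (MvPolynomial (Fin 2) ℚ) K (MvPolynomial.X 0 + 27) := by
      push_cast [m, map_add, map_ofNat]; ring
    rw [this]
    simp only [ne_eq, map_eq_zero_iff _ hinj]
    intro h
    have := congrArg (MvPolynomial.eval fun _ => (0 : ℚ)) h
    simp [map_ofNat] at this
  show z^2 = _
  simp only [z, r]
  have hw : (m-27)*(m+27) * ((m-27)*(m+27))⁻¹ = 1 := mul_inv_cancel₀ (mul_ne_zero h1 h2)
  have h2D : (2*(m-27)*(m+27))⁻¹ = 2⁻¹ * ((m-27)*(m+27))⁻¹ := by rw [mul_assoc, mul_inv]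
  simp only [div_eq_mul_inv, h2D]
  generalize ((m-27)*(m+27))⁻¹ = w at hw ⊢
  linear_combination ((s-1)^4*(2*s-1)^2*(1+(m-27)*(m+27)*w) - 4*(54*s^3 + 27*s^2 - 72*s + 23)*(-((s-1)^2*(2*s-1)*m + (54*s^3 + 27*s^2 - 72*s + 23)))*w) * hw
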